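/- Define p_n = A(BA(Aⁿ(1/6, 2/3))) for n ∈ ℕ. Then Aⁿ(1/6,2/3) → (0,1) as n → ∞, p_n → (1/6, 2/3), and the normalized differences d_n/|d_n| with d_n = p_n − (1/6,2/3) converge to (−2/√5, 1/√5). -/

import Mathlib

noncomputable def expA (p : ℝ × ℝ) : ℝ × ℝ :=
  (p.1 / (2 * (p.1 + 1)), (p.1 + p.2 + 1) / (2 * (p.1 + 1)))

noncomputable def expB (p : ℝ × ℝ) : ℝ × ℝ := (p.2 - 1/2, p.1 + 1/2)

noncomputable def expBA (p : ℝ × ℝ) : ℝ × ℝ := expB (expA p)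

noncomputable def pSeq (n : ℕ) : ℝ × ℝ := expA (expBA (expA^[n] (1/6, 2/3)))

noncomputable def dSeq (n : ℕ) : ℝ × ℝ :=
  ((pSeq n).1 - 1/6, (pSeq n).2 - 2/3)

noncomputable def dNorm (n : ℕ) : ℝ :=
  Real.sqrt ((dSeq n).1 ^ 2 + (dSeq n).2 ^ 2)

lemma two_pow_ge (n : ℕ) : (n:ℝ) + 1 ≤ 2 ^ n := by
  exact_mod_cast (Nat.lt_two_pow_self (n := n))

lemma iterA_eq (n : ℕ) :
    expA^[n] (1/6, 2/3) =
      (1/((2:ℝ)^(n+3)-2), 1 - ((n:ℝ)+2)/((2:ℝ)^(n+3)-2)) := by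
  induction n with
  | zero => norm_num [expA]
  | succ n ih =>
    have h8 : (8:ℝ) ≤ 2^(n+3) := by
      calc (8:ℝ) = 2^3 := by norm_num
      _ ≤ 2^(n+3) := by apply pow_le_pow_right₀ (by norm_num); omega
    have hc : ((2:ℝ)^(n+3)-2) ≠ 0 := by nlinarith
    have hc1 : ((2:ℝ)^(n+3)-1) ≠ 0 := by nlinarith
    have hc2 : ((2:ℝ)^(n+4)-2) ≠ 0 := by
      have : (2:ℝ)^(n+4) = 2 * 2^(n+3) := by ring
      nlinarith
    rw [Function.iterate_succ_apply', ih]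
    simp only [expA, Prod.mk.injEq]
    have hc2' : (-2 + (2:ℝ)^n*16) ≠ 0 := by
      have : (-2 + (2:ℝ)^n*16) = 2^(n+4)-2 := by ring
      rw [this]; exact hc2
    constructor
    · rw [show n+1+3 = (n+3)+1 by ring, pow_succ _ (n+3)]
      generalize (2:ℝ)^(n+3) = x at *
      field_simp
      linear_combination mul_inv_cancel₀ hc1
    · rw [show n+1+3 = (n+3)+1 by ring, pow_succ _ (n+3)]
      generalize (2:ℝ)^(n+3) = x at *
      field_simp
      push_cast
      linear_combination (2*x-5-(n:ℝ)) * mul_inv_cancel₀ hc1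

lemma G_pos (n : ℕ) : (0:ℝ) < 3*(2:ℝ)^(n+3) - n - 6 := by
  have := two_pow_ge n
  have h : (2:ℝ)^(n+3) = 8 * 2^n := by ring
  nlinarith

lemma expA_frac (X Y D : ℝ) (hD : D ≠ 0) (hXD : X + D ≠ 0) :
    expA (X/D, Y/D) = (X/(2*(X+D)), (X+Y+D)/(2*(X+D))) := by
  simp only [expA, Prod.mk.injEq]
  constructor <;> field_simp <;> ring

lemma pSeq_eq (n : ℕ) :
    pSeq n = (((2:ℝ)^(n+3) - n - 4)/(2*(3*(2:ℝ)^(n+3) - n - 6)),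
              (4*(2:ℝ)^(n+3) - n - 6)/(2*(3*(2:ℝ)^(n+3) - n - 6))) := by
  have h8 : (8:ℝ) ≤ 2^(n+3) := by
    calc (8:ℝ) = 2^3 := by norm_num
    _ ≤ 2^(n+3) := by apply pow_le_pow_right₀ (by norm_num); omega
  set m : ℝ := (2:ℝ)^(n+4) - 2 with hmdef
  have hm8 : (2:ℝ)^(n+4) = 2 * 2^(n+3) := by ring
  have hmpos : (0:ℝ) < m := by rw [hmdef]; nlinarith
  have hm : m ≠ 0 := ne_of_gt hmpos
  have hGpos := G_pos n
  have hG : (3*(2:ℝ)^(n+3) - n - 6) ≠ 0 := ne_of_gt hGpos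
  have h1 : expA (expA^[n] (1/6,2/3)) = (1/m, 1 - ((n:ℝ)+3)/m) := by
    rw [show expA (expA^[n] (1/6,2/3)) = expA^[n+1] (1/6,2/3) from
      (Function.iterate_succ_apply' expA n _).symm, iterA_eq (n+1)]
    have e1 : n+1+3 = n+4 := rfl
    rw [e1, Prod.mk.injEq]
    constructor
    · rfl
    · rw [hmdef]; push_cast; ring
  have h2 : expBA (expA^[n] (1/6,2/3)) = ((m-2*n-6)/(2*m), (m+2)/(2*m)) := by
    rw [expBA, h1]
    simp only [expB, Prod.mk.injEq]
    constructor <;> field_simp <;> ring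
  have hXD : (m-2*n-6) + 2*m ≠ 0 := by
    have : (m-2*n-6) + 2*m = 2*(3*(2:ℝ)^(n+3) - n - 6) := by rw [hmdef]; ring
    rw [this]; positivity
  rw [pSeq, h2, expA_frac _ _ _ (by positivity) hXD, Prod.mk.injEq]
  constructor
  · rw [div_eq_div_iff (by nlinarith) (by positivity)]
    rw [hmdef]; ring
  · rw [div_eq_div_iff (by nlinarith) (by positivity)]
    rw [hmdef]; ring

lemma dSeq_eq (n : ℕ) :
    dSeq n = (-((n:ℝ)+3)/(3*(3*(2:ℝ)^(n+3) - n - 6)),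
              ((n:ℝ)+6)/(6*(3*(2:ℝ)^(n+3) - n - 6))) := by
  have hG : (3*(2:ℝ)^(n+3) - n - 6) ≠ 0 := ne_of_gt (G_pos n)
  rw [dSeq, pSeq_eq]
  simp only [Prod.mk.injEq]
  have h2 : (2:ℝ)*(3*(2:ℝ)^(n+3) - n - 6) ≠ 0 := by positivity
  constructor
  · rw [div_sub' h2, div_eq_div_iff h2 (by positivity)]; ring
  · rw [div_sub' h2, div_eq_div_iff h2 (by positivity)]; ring

lemma Q_pos (n : ℕ) : (0:ℝ) < 5*n^2+36*n+72 := by positivity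

lemma dNorm_eq (n : ℕ) :
    dNorm n = Real.sqrt (5*n^2+36*n+72) / (6*(3*(2:ℝ)^(n+3) - n - 6)) := by
  have hGpos := G_pos n
  have hG : (3*(2:ℝ)^(n+3) - n - 6) ≠ 0 := ne_of_gt hGpos
  rw [dNorm, dSeq_eq]
  have h : (-((n:ℝ)+3)/(3*(3*(2:ℝ)^(n+3) - n - 6)))^2
      + (((n:ℝ)+6)/(6*(3*(2:ℝ)^(n+3) - n - 6)))^2
      = (5*n^2+36*n+72) / (6*(3*(2:ℝ)^(n+3) - n - 6))^2 := by
    field_simp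
    ring
  rw [h, Real.sqrt_div (by positivity), Real.sqrt_sq (by positivity)]

lemma ratio_eq (n : ℕ) :
    (dSeq n).1 / dNorm n
        = -2 / Real.sqrt (5 + 6*(1/((n:ℝ)+3)) + 9*(1/((n:ℝ)+3))^2) ∧
      (dSeq n).2 / dNorm n
        = (1 + 3*(1/((n:ℝ)+3))) / Real.sqrt (5 + 6*(1/((n:ℝ)+3)) + 9*(1/((n:ℝ)+3))^2) := by
  have hGpos := G_pos n
  have hG : (3*(2:ℝ)^(n+3) - n - 6) ≠ 0 := ne_of_gt hGpos
  have hk : (0:ℝ) < (n:ℝ)+3 := by positivity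
  have hkne : ((n:ℝ)+3) ≠ 0 := ne_of_gt hk
  have hR : (0:ℝ) < 5 + 6*(1/((n:ℝ)+3)) + 9*(1/((n:ℝ)+3))^2 := by positivity
  have hsR : Real.sqrt (5 + 6*(1/((n:ℝ)+3)) + 9*(1/((n:ℝ)+3))^2) ≠ 0 :=
    ne_of_gt (Real.sqrt_pos.mpr hR)
  have hQ : Real.sqrt (5*(n:ℝ)^2+36*n+72)
      = Real.sqrt (5 + 6*(1/((n:ℝ)+3)) + 9*(1/((n:ℝ)+3))^2) * ((n:ℝ)+3) := by
    rw [show (5:ℝ)*(n:ℝ)^2+36*n+72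
        = (5 + 6*(1/((n:ℝ)+3)) + 9*(1/((n:ℝ)+3))^2) * ((n:ℝ)+3)^2 by
      field_simp; ring]
    rw [Real.sqrt_mul hR.le, Real.sqrt_sq hk.le]
  rw [dNorm_eq, hQ]
  rw [show (dSeq n).1 = -((n:ℝ)+3)/(3*(3*(2:ℝ)^(n+3) - n - 6)) by rw [dSeq_eq]]
  rw [show (dSeq n).2 = ((n:ℝ)+6)/(6*(3*(2:ℝ)^(n+3) - n - 6)) by rw [dSeq_eq]]
  constructor
  · field_simp
    ring
  · field_simp
    ring

lemma tendsto_aux (a b c d e : ℝ) (hc : c ≠ 0) :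
    Filter.Tendsto (fun n : ℕ => (a*n+b)/(c*2^n + d*n + e)) Filter.atTop (nhds 0) := by
  have hhalf : ‖(1/2 : ℝ)‖ < 1 := by norm_num
  have hgeo : Filter.Tendsto (fun n : ℕ => ((n:ℝ))^1 * (1/2:ℝ)^n) Filter.atTop (nhds 0) :=
    (summable_pow_mul_geometric_of_norm_lt_one 1 hhalf).tendsto_atTop_zero
  have hgeo0 : Filter.Tendsto (fun n : ℕ => ((1/2:ℝ))^n) Filter.atTop (nhds 0) :=
    tendsto_pow_atTop_nhds_zero_of_lt_one (by norm_num) (by norm_num)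
  have hnum : Filter.Tendsto (fun n : ℕ => ((a*n+b) * (1/2:ℝ)^n)) Filter.atTop (nhds 0) := by
    have := (hgeo.const_mul a).add (hgeo0.const_mul b)
    simp only [mul_zero, add_zero, pow_one] at this
    refine this.congr fun n => ?_
    ring
  have hden : Filter.Tendsto (fun n : ℕ => c + (d*n+e) * (1/2:ℝ)^n) Filter.atTop (nhds c) := by
    have hnum2 : Filter.Tendsto (fun n : ℕ => ((d*n+e) * (1/2:ℝ)^n)) Filter.atTop (nhds 0) := by
      have := (hgeo.const_mul d).add (hgeo0.const_mul e)
      simp only [mul_zero, add_zero, pow_one] at this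
      refine this.congr fun n => ?_
      ring
    simpa using (tendsto_const_nhds (x := c)).add hnum2
  have := hnum.div hden hc
  simp only [zero_div] at this
  refine this.congr fun n => ?_
  have hne : ((1/2:ℝ))^n ≠ 0 := by positivity
  have key : c + (d*n+e)*(1/2:ℝ)^n = (c*2^n+d*n+e)*(1/2)^n := by
    have hpow : ((2:ℝ))^n * (1/2)^n = 1 := by rw [← mul_pow]; norm_num
    linear_combination (-c) * hpow
  simp only [Pi.div_apply]
  rw [key, mul_div_mul_right _ _ hne]

lemma ht0 : Filter.Tendsto (fun n : ℕ => 1/((n:ℝ)+3)) Filter.atTop (nhds 0) := by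
  have hk : Filter.Tendsto (fun n : ℕ => ((n:ℝ)+3)) Filter.atTop Filter.atTop :=
    Filter.tendsto_atTop_add_const_right _ 3 tendsto_natCast_atTop_atTop
  have h := tendsto_inv_atTop_zero.comp hk
  simpa [Function.comp_def, one_div] using h

lemma hF1 : Filter.Tendsto (fun t : ℝ => -2/Real.sqrt (5+6*t+9*t^2)) (nhds 0)
    (nhds (-2/Real.sqrt 5)) := by
  have hc1 : ContinuousAt (fun t : ℝ => -2/Real.sqrt (5+6*t+9*t^2)) 0 := by
    apply ContinuousAt.div continuousAt_const
    · exact (Real.continuous_sqrt.comp (by continuity)).continuousAt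
    · norm_num [Real.sqrt_eq_zero']
  have := hc1.tendsto
  norm_num at this
  convert this using 2 <;> norm_num

lemma hF2 : Filter.Tendsto (fun t : ℝ => (1+3*t)/Real.sqrt (5+6*t+9*t^2)) (nhds 0)
    (nhds (1/Real.sqrt 5)) := by
  have hc2 : ContinuousAt (fun t : ℝ => (1+3*t)/Real.sqrt (5+6*t+9*t^2)) 0 := by
    apply ContinuousAt.div (by fun_prop)
    · exact (Real.continuous_sqrt.comp (by continuity)).continuousAt
    · norm_num [Real.sqrt_eq_zero']
  have := hc2.tendsto
  norm_num at this
  convert this using 2 <;> norm_num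

set_option maxHeartbeats 1000000 in
theorem stmt_18 :
    Filter.Tendsto (fun n => expA^[n] (1/6, 2/3)) Filter.atTop
        (nhds ((0 : ℝ), (1 : ℝ))) ∧
      Filter.Tendsto pSeq Filter.atTop (nhds ((1/6 : ℝ), (2/3 : ℝ))) ∧
      Filter.Tendsto (fun n => ((dSeq n).1 / dNorm n, (dSeq n).2 / dNorm n))
        Filter.atTop
        (nhds ((-2 / Real.sqrt 5 : ℝ), (1 / Real.sqrt 5 : ℝ))) := by
  refine ⟨?_, ?_, ?_⟩
  · have h1 : Filter.Tendsto (fun n : ℕ => 1/((2:ℝ)^(n+3)-2)) Filter.atTop (nhds 0) := by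
      refine (tendsto_aux 0 1 8 0 (-2) (by norm_num)).congr fun n => ?_
      ring
    have h2 : Filter.Tendsto (fun n : ℕ => ((n:ℝ)+2)/((2:ℝ)^(n+3)-2)) Filter.atTop (nhds 0) := by
      refine (tendsto_aux 1 2 8 0 (-2) (by norm_num)).congr fun n => ?_
      ring
    have h2' : Filter.Tendsto (fun n : ℕ => 1 - ((n:ℝ)+2)/((2:ℝ)^(n+3)-2))
        Filter.atTop (nhds 1) := by
      simpa using (tendsto_const_nhds (x := (1:ℝ))).sub h2
    exact Filter.Tendsto.congr (fun n => (iterA_eq n).symm) (h1.prodMk_nhds h2')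
  · have hd1 : Filter.Tendsto (fun n : ℕ => (dSeq n).1) Filter.atTop (nhds 0) := by
      refine (tendsto_aux (-1) (-3) 72 (-3) (-18) (by norm_num)).congr fun n => ?_
      rw [show (dSeq n).1 = -((n:ℝ)+3)/(3*(3*(2:ℝ)^(n+3) - n - 6)) by rw [dSeq_eq]]
      ring
    have hd2 : Filter.Tendsto (fun n : ℕ => (dSeq n).2) Filter.atTop (nhds 0) := by
      refine (tendsto_aux 1 6 144 (-6) (-36) (by norm_num)).congr fun n => ?_
      rw [show (dSeq n).2 = ((n:ℝ)+6)/(6*(3*(2:ℝ)^(n+3) - n - 6)) by rw [dSeq_eq]]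
      ring
    have : Filter.Tendsto (fun n : ℕ => ((dSeq n).1 + 1/6, (dSeq n).2 + 2/3))
        Filter.atTop (nhds ((1/6 : ℝ), (2/3 : ℝ))) := by
      have := (hd1.add (tendsto_const_nhds (x := (1/6:ℝ)))).prodMk_nhds
        (hd2.add (tendsto_const_nhds (x := (2/3:ℝ))))
      simpa using this
    refine this.congr fun n => ?_
    simp only [dSeq]
    exact Prod.ext (by ring) (by ring)
  · refine Filter.Tendsto.congr (fun n => ?_) ((hF1.comp ht0).prodMk_nhds (hF2.comp ht0))
    simp only [Function.comp]
    exact Prod.ext ((ratio_eq n).1.symm) ((ratio_eq n).2.symm)
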